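/- arXiv:1210.0924 — 2 statements merged into one kernel-verified Lean document; each statement's English description precedes it below -/
import Mathlib

section
/- With notation as above (weight decompositions under λ, v ∈ V\{0}, w ∈ W\{0}, p(α)=log‖λ(α)·w‖²−log‖λ(α)·v‖²): if w_λ(w) > w_λ(v) then lim_{α→0} p(α) = −∞, and if w_λ(w) ≤ w_λ(v) then p is bounded below on {0 < |α| ≤ 1}. -/
open Filter Topology

lemma my_zpow_anti {x : ℝ} (h0 : 0 < x) (h1 : x ≤ 1) {m n : ℤ} (h : m ≤ n) :
    x ^ n ≤ x ^ m := by
  rcases eq_or_lt_of_le h1 with rfl | hlt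
  · simp
  · exact (zpow_right_strictAnti₀ h0 hlt).antitone h

lemma sum_zpow_smul_norm_le {E : Type*} [NormedAddCommGroup E] [NormedSpace ℂ E]
    (A : Finset ℤ) (c : ℤ → E) (w0 : ℤ) (hmin : ∀ a, c a ≠ 0 → w0 ≤ a)
    {α : ℂ} (hα : 0 < ‖α‖) (hα1 : ‖α‖ ≤ 1) :
    ‖∑ a ∈ A, α ^ a • c a‖ ≤ (∑ a ∈ A, ‖c a‖) * ‖α‖ ^ w0 := by
  calc ‖∑ a ∈ A, α ^ a • c a‖ ≤ ∑ a ∈ A, ‖α ^ a • c a‖ := norm_sum_le _ _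
  _ ≤ ∑ a ∈ A, ‖c a‖ * ‖α‖ ^ w0 := by
      refine Finset.sum_le_sum fun a _ => ?_
      rcases eq_or_ne (c a) 0 with h | h
      · simp [h]
      · rw [norm_smul, norm_zpow, mul_comm]
        exact mul_le_mul_of_nonneg_left (my_zpow_anti hα hα1 (hmin a h)) (norm_nonneg _)
  _ = _ := by rw [← Finset.sum_mul]

lemma sum_zpow_smul_ne_zero {E : Type*} [NormedAddCommGroup E] [NormedSpace ℂ E]
    (Esub : ℤ → Submodule ℂ E) (hInt : DirectSum.IsInternal Esub)
    (A : Finset ℤ) (hbot : ∀ a, a ∉ A → Esub a = ⊥)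
    (c : ℤ → E) (hmem : ∀ a, c a ∈ Esub a) (w0 : ℤ) (hc : c w0 ≠ 0)
    {α : ℂ} (hα : α ≠ 0) : ∑ a ∈ A, α ^ a • c a ≠ 0 := by
  have hw0A : w0 ∈ A := by
    by_contra h
    exact hc (by simpa [hbot w0 h, Submodule.mem_bot] using hmem w0)
  intro h0
  have hInd := hInt.submodule_iSupIndep w0
  have hx1 : α ^ w0 • c w0 ∈ Esub w0 := Submodule.smul_mem _ _ (hmem w0)
  have heq : α ^ w0 • c w0 = -∑ a ∈ A.erase w0, α ^ a • c a := by
    have h := Finset.add_sum_erase A (fun a => α ^ a • c a) hw0A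
    rw [← h] at h0
    exact eq_neg_of_add_eq_zero_left h0
  have hx2 : α ^ w0 • c w0 ∈ ⨆ (j) (_ : j ≠ w0), Esub j := by
    rw [heq]
    refine Submodule.neg_mem _ (Submodule.sum_mem _ fun a ha => ?_)
    have hle : Esub a ≤ ⨆ (j) (_ : j ≠ w0), Esub j :=
      le_iSup₂ (f := fun (j : ℤ) (_ : j ≠ w0) => Esub j) a (Finset.ne_of_mem_erase ha)
    exact hle (Submodule.smul_mem _ _ (hmem a))
  have := Submodule.disjoint_def.mp hInd _ hx1 hx2
  rw [smul_eq_zero] at this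
  rcases this with h | h
  · exact zpow_ne_zero w0 hα h
  · exact hc h

lemma exists_pos_lower_bound {E : Type*} [NormedAddCommGroup E] [NormedSpace ℂ E]
    (Esub : ℤ → Submodule ℂ E) (hInt : DirectSum.IsInternal Esub)
    (A : Finset ℤ) (hbot : ∀ a, a ∉ A → Esub a = ⊥)
    (c : ℤ → E) (hmem : ∀ a, c a ∈ Esub a) (w0 : ℤ)
    (hc : c w0 ≠ 0) (hmin : ∀ a, c a ≠ 0 → w0 ≤ a) :
    ∃ k : ℝ, 0 < k ∧ ∀ α : ℂ, 0 < ‖α‖ → ‖α‖ ≤ 1 →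
      k * ‖α‖ ^ w0 ≤ ‖∑ a ∈ A, α ^ a • c a‖ := by
  have hw0A : w0 ∈ A := by
    by_contra h
    exact hc (by simpa [hbot w0 h, Submodule.mem_bot] using hmem w0)
  set M : ℝ := ∑ a ∈ A, ‖c a‖ with hMdef
  have hcw0 : (0:ℝ) < ‖c w0‖ := norm_pos_iff.mpr hc
  have hM : 0 < M :=
    lt_of_lt_of_le hcw0 (Finset.single_le_sum (fun a _ => norm_nonneg (c a)) hw0A)
  set δ : ℝ := min (‖c w0‖ / (2 * M)) (1 / 2) with hδdef
  have hδ0 : 0 < δ := lt_min (by positivity) (by norm_num)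
  have hδ1 : δ ≤ 1 / 2 := min_le_right _ _
  -- near part
  have hnear : ∀ α : ℂ, 0 < ‖α‖ → ‖α‖ ≤ δ →
      (‖c w0‖ / 2) * ‖α‖ ^ w0 ≤ ‖∑ a ∈ A, α ^ a • c a‖ := by
    intro α hα hαδ
    have hsplit := Finset.add_sum_erase A (fun a => α ^ a • c a) hw0A
    have hrest : ‖∑ a ∈ A.erase w0, α ^ a • c a‖ ≤ ‖α‖ ^ w0 * (‖α‖ * M) := by
      calc ‖∑ a ∈ A.erase w0, α ^ a • c a‖ ≤ ∑ a ∈ A.erase w0, ‖α ^ a • c a‖ :=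
            norm_sum_le _ _
        _ ≤ ∑ a ∈ A.erase w0, (‖α‖ ^ w0 * ‖α‖) * ‖c a‖ := by
            refine Finset.sum_le_sum fun a ha => ?_
            rcases eq_or_ne (c a) 0 with h | h
            · simp [h]
            · rw [norm_smul, norm_zpow]
              refine mul_le_mul_of_nonneg_right ?_ (norm_nonneg _)
              have haw : w0 + 1 ≤ a :=
                Int.add_one_le_iff.mpr
                  (lt_of_le_of_ne (hmin a h) (Ne.symm (Finset.ne_of_mem_erase ha)))
              have h2 : ‖α‖ ^ a ≤ ‖α‖ ^ (w0 + 1) :=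
                my_zpow_anti hα (le_trans hαδ (le_trans hδ1 (by norm_num))) haw
              rwa [zpow_add₀ (ne_of_gt hα), zpow_one] at h2
        _ = (‖α‖ ^ w0 * ‖α‖) * ∑ a ∈ A.erase w0, ‖c a‖ := by rw [Finset.mul_sum]
        _ ≤ ‖α‖ ^ w0 * (‖α‖ * M) := by
            rw [mul_assoc]
            refine mul_le_mul_of_nonneg_left
              (mul_le_mul_of_nonneg_left ?_ (norm_nonneg α)) (by positivity)
            exact Finset.sum_le_sum_of_subset_of_nonneg (Finset.erase_subset _ _)
              fun a _ _ => norm_nonneg _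
    have hαM : ‖α‖ * M ≤ ‖c w0‖ / 2 := by
      have h3 : ‖α‖ ≤ ‖c w0‖ / (2 * M) := le_trans hαδ (min_le_left _ _)
      calc ‖α‖ * M ≤ (‖c w0‖ / (2 * M)) * M := mul_le_mul_of_nonneg_right h3 hM.le
        _ = ‖c w0‖ / 2 := by field_simp
    have hmain : ‖α‖ ^ w0 * ‖c w0‖ - ‖α‖ ^ w0 * (‖α‖ * M) ≤ ‖∑ a ∈ A, α ^ a • c a‖ := by
      have h1 : ‖α ^ w0 • c w0‖ - ‖∑ a ∈ A.erase w0, α ^ a • c a‖ ≤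
          ‖∑ a ∈ A, α ^ a • c a‖ := by
        rw [← hsplit]
        have h4 := norm_sub_norm_le (α ^ w0 • c w0) (-∑ a ∈ A.erase w0, α ^ a • c a)
        simpa using h4
      have h2 : ‖α ^ w0 • c w0‖ = ‖α‖ ^ w0 * ‖c w0‖ := by rw [norm_smul, norm_zpow]
      linarith
    have h5 : ‖α‖ ^ w0 * (‖α‖ * M) ≤ ‖α‖ ^ w0 * (‖c w0‖ / 2) :=
      mul_le_mul_of_nonneg_left hαM (by positivity)
    nlinarith [hmain, h5]
  -- far part via compactness
  have hKc : IsCompact {α : ℂ | δ ≤ ‖α‖ ∧ ‖α‖ ≤ 1} := by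
    have hset : {α : ℂ | δ ≤ ‖α‖ ∧ ‖α‖ ≤ 1} =
        Metric.closedBall 0 1 ∩ {α : ℂ | δ ≤ ‖α‖} := by
      ext α
      simp [Metric.mem_closedBall, dist_zero_right, and_comm]
    rw [hset]
    exact (isCompact_closedBall 0 1).inter_right
      (isClosed_le continuous_const continuous_norm)
  have hKne : {α : ℂ | δ ≤ ‖α‖ ∧ ‖α‖ ≤ 1}.Nonempty := by
    refine ⟨(δ : ℂ), ?_, ?_⟩ <;>
      simp [Complex.norm_real, abs_of_pos hδ0] <;> linarith
  have hcont : ContinuousOn (fun α : ℂ => ‖∑ a ∈ A, α ^ a • c a‖)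
      {α : ℂ | δ ≤ ‖α‖ ∧ ‖α‖ ≤ 1} := by
    refine ContinuousOn.norm ?_
    refine continuousOn_finset_sum _ fun a _ => ?_
    refine ContinuousOn.smul ?_ continuousOn_const
    intro x hx
    have hx0 : x ≠ 0 := by
      intro h
      rw [h] at hx
      simp only [Set.mem_setOf_eq, norm_zero] at hx
      linarith [hx.1]
    exact (continuousAt_zpow₀ x a (Or.inl hx0)).continuousWithinAt
  obtain ⟨x₀, hx₀K, hx₀min⟩ := hKc.exists_isMinOn hKne hcont
  have hx₀0 : x₀ ≠ 0 := by
    intro h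
    rw [h] at hx₀K
    simp only [Set.mem_setOf_eq, norm_zero] at hx₀K
    linarith [hx₀K.1]
  have hm : 0 < ‖∑ a ∈ A, x₀ ^ a • c a‖ :=
    norm_pos_iff.mpr (sum_zpow_smul_ne_zero Esub hInt A hbot c hmem w0 hc hx₀0)
  set m := ‖∑ a ∈ A, x₀ ^ a • c a‖ with hmdef
  set T : ℝ := max 1 (δ ^ w0) with hTdef
  have hT : 0 < T := lt_of_lt_of_le one_pos (le_max_left _ _)
  have hTb : ∀ α : ℂ, δ ≤ ‖α‖ → ‖α‖ ≤ 1 → ‖α‖ ^ w0 ≤ T := by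
    intro α h1 h2
    have hα0 : 0 < ‖α‖ := lt_of_lt_of_le hδ0 h1
    rcases le_or_gt 0 w0 with hw | hw
    · refine le_trans ?_ (le_max_left _ _)
      simpa using my_zpow_anti hα0 h2 hw
    · refine le_trans ?_ (le_max_right _ _)
      have hn : w0 = -(((-w0).toNat : ℤ)) := by omega
      rw [hn, zpow_neg, zpow_neg, zpow_natCast, zpow_natCast]
      exact inv_anti₀ (pow_pos hδ0 _) (pow_le_pow_left₀ hδ0.le h1 _)
  refine ⟨min (‖c w0‖ / 2) (m / T), lt_min (by positivity) (div_pos hm hT), ?_⟩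
  intro α hα hα1
  have hzp : (0:ℝ) < ‖α‖ ^ w0 := zpow_pos hα w0
  rcases le_or_gt ‖α‖ δ with h | h
  · exact le_trans (mul_le_mul_of_nonneg_right (min_le_left _ _) hzp.le) (hnear α hα h)
  · have hK : α ∈ {α : ℂ | δ ≤ ‖α‖ ∧ ‖α‖ ≤ 1} := ⟨h.le, hα1⟩
    have h1 : m ≤ ‖∑ a ∈ A, α ^ a • c a‖ := hx₀min hK
    calc min (‖c w0‖ / 2) (m / T) * ‖α‖ ^ w0 ≤ (m / T) * T := by
          refine mul_le_mul (min_le_right _ _) (hTb α h.le hα1) hzp.le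
            (div_pos hm hT).le
      _ = m := by field_simp
      _ ≤ _ := h1

/-- With the weight decomposition notation as before and
`p(α) = log‖λ(α)·w‖² - log‖λ(α)·v‖²` : if `w_λ(w) > w_λ(v)` then `p(α) → -∞` as
`α → 0`, while if `w_λ(w) ≤ w_λ(v)` then `p` is bounded below on `{0 < |α| ≤ 1}`. -/
theorem energy_asymptotics_along_one_parameter_subgroup
    {V W : Type*} [NormedAddCommGroup V] [NormedSpace ℂ V] [FiniteDimensional ℂ V]
    [NormedAddCommGroup W] [NormedSpace ℂ W] [FiniteDimensional ℂ W]
    (Vsub : ℤ → Submodule ℂ V) (hIntV : DirectSum.IsInternal Vsub)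
    (Wsub : ℤ → Submodule ℂ W) (hIntW : DirectSum.IsInternal Wsub)
    (A B : Finset ℤ) (hbotV : ∀ a : ℤ, a ∉ A → Vsub a = ⊥)
    (hbotW : ∀ b : ℤ, b ∉ B → Wsub b = ⊥)
    (v : V) (hv : v ≠ 0) (w : W) (hw : w ≠ 0)
    (c : ℤ → V) (hcmem : ∀ a, c a ∈ Vsub a) (hvsum : v = ∑ a ∈ A, c a)
    (d : ℤ → W) (hdmem : ∀ b, d b ∈ Wsub b) (hwsum : w = ∑ b ∈ B, d b)
    (wv ww : ℤ)
    (hwv : c wv ≠ 0 ∧ ∀ a : ℤ, c a ≠ 0 → wv ≤ a)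
    (hww : d ww ≠ 0 ∧ ∀ b : ℤ, d b ≠ 0 → ww ≤ b) :
    (wv < ww →
      Tendsto (fun α : ℂ =>
          Real.log (‖∑ b ∈ B, α ^ b • d b‖ ^ 2)
            - Real.log (‖∑ a ∈ A, α ^ a • c a‖ ^ 2)) (𝓝[≠] 0) atBot) ∧
    (ww ≤ wv →
      ∃ C : ℝ, ∀ α : ℂ, 0 < ‖α‖ → ‖α‖ ≤ 1 →
        C ≤ Real.log (‖∑ b ∈ B, α ^ b • d b‖ ^ 2)
              - Real.log (‖∑ a ∈ A, α ^ a • c a‖ ^ 2)) := by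
  obtain ⟨hcwv, hminv⟩ := hwv
  obtain ⟨hdww, hminw⟩ := hww
  -- total mass constants
  set Mv : ℝ := ∑ a ∈ A, ‖c a‖ with hMvdef
  set Mw : ℝ := ∑ b ∈ B, ‖d b‖ with hMwdef
  have hwvA : wv ∈ A := by
    by_contra h
    exact hcwv (by simpa [hbotV wv h, Submodule.mem_bot] using hcmem wv)
  have hwwB : ww ∈ B := by
    by_contra h
    exact hdww (by simpa [hbotW ww h, Submodule.mem_bot] using hdmem ww)
  have hMv : 0 < Mv :=
    lt_of_lt_of_le (norm_pos_iff.mpr hcwv)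
      (Finset.single_le_sum (fun a _ => norm_nonneg (c a)) hwvA)
  have hMw : 0 < Mw :=
    lt_of_lt_of_le (norm_pos_iff.mpr hdww)
      (Finset.single_le_sum (fun b _ => norm_nonneg (d b)) hwwB)
  obtain ⟨kv, hkv, hkvle⟩ :=
    exists_pos_lower_bound Vsub hIntV A hbotV c hcmem wv hcwv hminv
  obtain ⟨kw, hkw, hkwle⟩ :=
    exists_pos_lower_bound Wsub hIntW B hbotW d hdmem ww hdww hminw
  -- positivity of the two norms on the punctured disk
  have hfpos : ∀ α : ℂ, 0 < ‖α‖ → 0 < ‖∑ a ∈ A, α ^ a • c a‖ := fun α hα =>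
    norm_pos_iff.mpr
      (sum_zpow_smul_ne_zero Vsub hIntV A hbotV c hcmem wv hcwv (norm_pos_iff.mp hα))
  have hgpos : ∀ α : ℂ, 0 < ‖α‖ → 0 < ‖∑ b ∈ B, α ^ b • d b‖ := fun α hα =>
    norm_pos_iff.mpr
      (sum_zpow_smul_ne_zero Wsub hIntW B hbotW d hdmem ww hdww (norm_pos_iff.mp hα))
  -- rewrite p in terms of single logs
  have hp : ∀ α : ℂ,
      Real.log (‖∑ b ∈ B, α ^ b • d b‖ ^ 2) - Real.log (‖∑ a ∈ A, α ^ a • c a‖ ^ 2)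
        = 2 * Real.log ‖∑ b ∈ B, α ^ b • d b‖ - 2 * Real.log ‖∑ a ∈ A, α ^ a • c a‖ := by
    intro α
    rw [Real.log_pow, Real.log_pow]
    push_cast
    ring
  -- bounds on the logs, valid on the punctured unit disk
  have hlogg_ub : ∀ α : ℂ, 0 < ‖α‖ → ‖α‖ ≤ 1 →
      Real.log ‖∑ b ∈ B, α ^ b • d b‖ ≤ Real.log Mw + ww * Real.log ‖α‖ := by
    intro α hα hα1
    have h1 := sum_zpow_smul_norm_le B d ww hminw hα hα1
    have h2 := Real.log_le_log (hgpos α hα) h1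
    rwa [Real.log_mul (ne_of_gt hMw) (ne_of_gt (zpow_pos hα ww)), Real.log_zpow] at h2
  have hlogf_ub : ∀ α : ℂ, 0 < ‖α‖ → ‖α‖ ≤ 1 →
      Real.log ‖∑ a ∈ A, α ^ a • c a‖ ≤ Real.log Mv + wv * Real.log ‖α‖ := by
    intro α hα hα1
    have h1 := sum_zpow_smul_norm_le A c wv hminv hα hα1
    have h2 := Real.log_le_log (hfpos α hα) h1
    rwa [Real.log_mul (ne_of_gt hMv) (ne_of_gt (zpow_pos hα wv)), Real.log_zpow] at h2
  have hlogf_lb : ∀ α : ℂ, 0 < ‖α‖ → ‖α‖ ≤ 1 →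
      Real.log kv + wv * Real.log ‖α‖ ≤ Real.log ‖∑ a ∈ A, α ^ a • c a‖ := by
    intro α hα hα1
    have h1 := hkvle α hα hα1
    have h2 := Real.log_le_log (by positivity) h1
    rwa [Real.log_mul (ne_of_gt hkv) (ne_of_gt (zpow_pos hα wv)), Real.log_zpow] at h2
  have hlogg_lb : ∀ α : ℂ, 0 < ‖α‖ → ‖α‖ ≤ 1 →
      Real.log kw + ww * Real.log ‖α‖ ≤ Real.log ‖∑ b ∈ B, α ^ b • d b‖ := by
    intro α hα hα1
    have h1 := hkwle α hα hα1
    have h2 := Real.log_le_log (by positivity) h1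
    rwa [Real.log_mul (ne_of_gt hkw) (ne_of_gt (zpow_pos hα ww)), Real.log_zpow] at h2
  constructor
  · -- wv < ww : tendsto atBot
    intro hlt
    have hlog : Tendsto (fun α : ℂ => Real.log ‖α‖) (𝓝[≠] (0:ℂ)) atBot := by
      refine Real.tendsto_log_nhdsNE_zero.comp ?_
      refine tendsto_nhdsWithin_of_tendsto_nhds_of_eventually_within _ ?_ ?_
      · have : Tendsto (fun α : ℂ => ‖α‖) (𝓝 0) (𝓝 0) := by
          simpa using (continuous_norm.tendsto (0:ℂ))
        exact this.mono_left nhdsWithin_le_nhds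
      · filter_upwards [eventually_mem_nhdsWithin] with α hα
        exact norm_ne_zero_iff.mpr hα
    have hq : Tendsto (fun α : ℂ =>
        (2 * ((ww : ℝ) - wv)) * Real.log ‖α‖ + 2 * (Real.log Mw - Real.log kv))
        (𝓝[≠] (0:ℂ)) atBot := by
      refine tendsto_atBot_add_const_right _ _ ?_
      have hpos : (0:ℝ) < 2 * ((ww : ℝ) - wv) := by
        have h' : (wv:ℝ) < ww := by exact_mod_cast hlt
        linarith
      exact (tendsto_const_mul_atBot_of_pos hpos).mpr hlog
    have hev : ∀ᶠ α : ℂ in 𝓝[≠] (0:ℂ),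
        Real.log (‖∑ b ∈ B, α ^ b • d b‖ ^ 2) - Real.log (‖∑ a ∈ A, α ^ a • c a‖ ^ 2)
          ≤ (2 * ((ww : ℝ) - wv)) * Real.log ‖α‖ + 2 * (Real.log Mw - Real.log kv) := by
      have hball : ∀ᶠ α : ℂ in 𝓝 (0:ℂ), ‖α‖ ≤ 1 := by
        filter_upwards [Metric.ball_mem_nhds (0:ℂ) one_pos] with α hα
        rw [Metric.mem_ball, dist_zero_right] at hα
        exact hα.le
      filter_upwards [eventually_mem_nhdsWithin,
        eventually_nhdsWithin_of_eventually_nhds hball] with α hα0 hα1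
      have hα : 0 < ‖α‖ := norm_pos_iff.mpr hα0
      rw [hp α]
      have h1 := hlogg_ub α hα hα1
      have h2 := hlogf_lb α hα hα1
      nlinarith [h1, h2]
    exact tendsto_atBot_mono' _ hev hq
  · -- ww ≤ wv : bounded below
    intro hle
    refine ⟨2 * (Real.log kw - Real.log Mv), fun α hα hα1 => ?_⟩
    rw [hp α]
    have h1 := hlogg_lb α hα hα1
    have h2 := hlogf_ub α hα hα1
    have h3 : ((ww : ℝ) - wv) * Real.log ‖α‖ ≥ 0 := by
      have h1' : ((ww : ℝ) - wv) ≤ 0 := by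
        have : (ww : ℝ) ≤ wv := by exact_mod_cast hle
        linarith
      have h2' : Real.log ‖α‖ ≤ 0 := Real.log_nonpos (norm_nonneg α) hα1
      nlinarith [mul_nonneg (neg_nonneg.mpr h1') (neg_nonneg.mpr h2')]
    nlinarith [h1, h2, h3]
end

section
/- Let G be a topological group acting continuously by linear maps on finite-dimensional complex inner product spaces V and W, preserving no structure in particular. For nonzero v ∈ V, w ∈ W define p_{v,w}(σ) := log‖σ·w‖² − log‖σ·v‖², and let O_{vw} = G·[(v,w)] and O_v = G·[(v,0)] be the orbits in P(V ⊕ W) with Fubini–Study distance d_g. Then inf_{σ∈G} p_{v,w}(σ) = log tan² d_g( cl(O_{vw}), cl(O_v) ), where d_g(A,B) denotes the infimum of distances between the closures of the two orbits. In particular p_{v,w} is bounded below on G if and only if the closures of O_{vw} and O_v are disjoint. -/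
open Filter Topology

/-- Fubini–Study distance between the lines spanned by two (nonzero) vectors:
`cos d = |⟨x,y⟩| / (‖x‖‖y‖)`, `d ∈ [0, π/2]`. -/
noncomputable def fubiniStudyDist {E : Type*} [NormedAddCommGroup E]
    [InnerProductSpace ℂ E] (x y : E) : ℝ :=
  Real.arccos (‖(inner ℂ x y : ℂ)‖ / (‖x‖ * ‖y‖))

/-- The diagonal action of `σ ∈ G` on `V ⊕ W` (with the `ℓ²` inner product). -/
noncomputable def diagAct {G V W : Type*} [Group G]
    [NormedAddCommGroup V] [InnerProductSpace ℂ V]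
    [NormedAddCommGroup W] [InnerProductSpace ℂ W]
    (ρ : G →* V ≃ₗ[ℂ] V) (τ : G →* W ≃ₗ[ℂ] W) (σ : G) (x : V × W) :
    WithLp 2 (V × W) :=
  (WithLp.equiv 2 (V × W)).symm (ρ σ x.1, τ σ x.2)

/-- The orbit of `[x]` in `ℙ(V ⊕ W)`, modelled by the unit-normalized vectors
`σ·x / ‖σ·x‖` in the (compact) unit sphere of `V ⊕ W`. -/
noncomputable def projOrbit {G V W : Type*} [Group G]
    [NormedAddCommGroup V] [InnerProductSpace ℂ V]
    [NormedAddCommGroup W] [InnerProductSpace ℂ W]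
    (ρ : G →* V ≃ₗ[ℂ] V) (τ : G →* W ≃ₗ[ℂ] W) (x : V × W) :
    Set (WithLp 2 (V × W)) :=
  Set.range fun σ : G => ‖diagAct ρ τ σ x‖⁻¹ • diagAct ρ τ σ x

section Aux

theorem KN.smul_inner_smul {E : Type*} [NormedAddCommGroup E] [InnerProductSpace ℂ E]
    (r t : ℝ) (x y : E) : (inner ℂ (r • x) (t • y) : ℂ) = ((r * t : ℝ) : ℂ) * inner ℂ x y := by
  rw [← algebraMap_smul ℂ r x, ← algebraMap_smul ℂ t y, RCLike.algebraMap_eq_ofReal,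
    inner_smul_real_left, inner_smul_real_right, smul_smul, Complex.real_smul,
    Complex.ofReal_mul]

theorem KN.arccos_antitone : Antitone Real.arccos := by
  intro u t h
  simp only [Real.arccos]
  linarith [Real.monotone_arcsin h]

variable {G V W : Type*} [Group G]
    [NormedAddCommGroup V] [InnerProductSpace ℂ V]
    [NormedAddCommGroup W] [InnerProductSpace ℂ W]

/-- Normalized orbit point. -/
noncomputable def KN.npt (ρ : G →* V ≃ₗ[ℂ] V) (τ : G →* W ≃ₗ[ℂ] W) (σ : G) (x : V × W) : WithLp 2 (V × W) :=
  ‖diagAct ρ τ σ x‖⁻¹ • diagAct ρ τ σ x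

theorem KN.projOrbit_eq (ρ : G →* V ≃ₗ[ℂ] V) (τ : G →* W ≃ₗ[ℂ] W) (x : V × W) :
    projOrbit ρ τ x = Set.range fun σ : G => KN.npt ρ τ σ x := rfl

theorem KN.csq (ρ : G →* V ≃ₗ[ℂ] V) (τ : G →* W ≃ₗ[ℂ] W) (v : V) (w : W) (σ : G) :
    ‖diagAct ρ τ σ (v, w)‖ ^ 2 = ‖ρ σ v‖ ^ 2 + ‖τ σ w‖ ^ 2 := by
  simpa [diagAct] using WithLp.prod_norm_sq_eq_of_L2 (diagAct ρ τ σ (v, w))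

/-- `cos` of the Fubini–Study distance between the diagonal orbit points. -/
noncomputable def KN.sfun (ρ : G →* V ≃ₗ[ℂ] V) (τ : G →* W ≃ₗ[ℂ] W) (v : V) (w : W) (σ : G) : ℝ :=
  ‖ρ σ v‖ / ‖diagAct ρ τ σ (v, w)‖

theorem KN.apos (ρ : G →* V ≃ₗ[ℂ] V) (τ : G →* W ≃ₗ[ℂ] W) (v : V) (w : W) (hv : v ≠ 0) (hw : w ≠ 0) (σ : G) : 0 < ‖ρ σ v‖ :=
  norm_pos_iff.mpr (by simp [hv])

theorem KN.bpos (ρ : G →* V ≃ₗ[ℂ] V) (τ : G →* W ≃ₗ[ℂ] W) (v : V) (w : W) (hv : v ≠ 0) (hw : w ≠ 0) (σ : G) : 0 < ‖τ σ w‖ :=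
  norm_pos_iff.mpr (by simp [hw])

theorem KN.cpos (ρ : G →* V ≃ₗ[ℂ] V) (τ : G →* W ≃ₗ[ℂ] W) (v : V) (w : W) (hv : v ≠ 0) (hw : w ≠ 0) (σ : G) :
    0 < ‖diagAct ρ τ σ (v, w)‖ := by
  rcases (norm_nonneg (diagAct ρ τ σ (v, w))).lt_or_eq with h | h
  · exact h
  · exfalso
    have h2 := KN.csq ρ τ v w σ
    rw [← h] at h2
    nlinarith [KN.apos ρ τ v w hv hw σ, KN.bpos ρ τ v w hv hw σ]

theorem KN.spos (ρ : G →* V ≃ₗ[ℂ] V) (τ : G →* W ≃ₗ[ℂ] W) (v : V) (w : W) (hv : v ≠ 0) (hw : w ≠ 0) (σ : G) :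
    0 < KN.sfun ρ τ v w σ :=
  div_pos (KN.apos ρ τ v w hv hw σ) (KN.cpos ρ τ v w hv hw σ)

theorem KN.slt1 (ρ : G →* V ≃ₗ[ℂ] V) (τ : G →* W ≃ₗ[ℂ] W) (v : V) (w : W) (hv : v ≠ 0) (hw : w ≠ 0) (σ : G) :
    KN.sfun ρ τ v w σ < 1 := by
  rw [KN.sfun, div_lt_one (KN.cpos ρ τ v w hv hw σ)]
  have h2 := KN.csq ρ τ v w σ
  have hb := KN.bpos ρ τ v w hv hw σ
  have hsq : ‖ρ σ v‖ ^ 2 < ‖diagAct ρ τ σ (v, w)‖ ^ 2 := by nlinarith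
  exact lt_of_pow_lt_pow_left₀ 2 (norm_nonneg _) hsq

theorem KN.norm_diag0 (ρ : G →* V ≃ₗ[ℂ] V) (τ : G →* W ≃ₗ[ℂ] W) (v : V) (w : W) (σ : G) : ‖diagAct ρ τ σ (v, 0)‖ = ‖ρ σ v‖ := by
  have : diagAct ρ τ σ (v, 0) = (WithLp.equiv 2 (V × W)).symm (ρ σ v, 0) := by
    simp [diagAct]
  rw [this]
  exact WithLp.norm_toLp_fst 2 V W _

theorem KN.Xnorm (ρ : G →* V ≃ₗ[ℂ] V) (τ : G →* W ≃ₗ[ℂ] W) (v : V) (w : W) (hv : v ≠ 0) (hw : w ≠ 0) (σ : G) :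
    ‖KN.npt ρ τ σ (v, w)‖ = 1 := by
  rw [KN.npt, norm_smul, norm_inv, norm_norm,
    inv_mul_cancel₀ (KN.cpos ρ τ v w hv hw σ).ne']

theorem KN.Ynorm (ρ : G →* V ≃ₗ[ℂ] V) (τ : G →* W ≃ₗ[ℂ] W) (v : V) (w : W) (hv : v ≠ 0) (hw : w ≠ 0) (σ : G) :
    ‖KN.npt ρ τ σ (v, 0)‖ = 1 := by
  rw [KN.npt, norm_smul, norm_inv, norm_norm, KN.norm_diag0 ρ τ v w,
    inv_mul_cancel₀ (KN.apos ρ τ v w hv hw σ).ne']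

theorem KN.Ysnd (ρ : G →* V ≃ₗ[ℂ] V) (τ : G →* W ≃ₗ[ℂ] W) (v : V) (w : W) (σ : G) : (KN.npt ρ τ σ (v, 0)).snd = 0 := by
  simp [KN.npt, diagAct]

theorem KN.Xfst_norm (ρ : G →* V ≃ₗ[ℂ] V) (τ : G →* W ≃ₗ[ℂ] W) (v : V) (w : W) (σ : G) :
    ‖(KN.npt ρ τ σ (v, w)).fst‖ = KN.sfun ρ τ v w σ := by
  have h1 : (KN.npt ρ τ σ (v, w)).fst = ‖diagAct ρ τ σ (v, w)‖⁻¹ • (ρ σ v) := by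
    simp [KN.npt, diagAct]
  rw [h1, norm_smul, norm_inv, norm_norm, KN.sfun, inv_mul_eq_div]

theorem KN.dist_eq (ρ : G →* V ≃ₗ[ℂ] V) (τ : G →* W ≃ₗ[ℂ] W) (v : V) (w : W) (hv : v ≠ 0) (hw : w ≠ 0) (σ : G) :
    fubiniStudyDist (KN.npt ρ τ σ (v, w)) (KN.npt ρ τ σ (v, 0))
      = Real.arccos (KN.sfun ρ τ v w σ) := by
  have hinner : ‖(inner ℂ (KN.npt ρ τ σ (v, w)) (KN.npt ρ τ σ (v, 0)) : ℂ)‖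
      = KN.sfun ρ τ v w σ := by
    rw [KN.npt, KN.npt, KN.smul_inner_smul]
    have hd : (inner ℂ (diagAct ρ τ σ (v, w)) (diagAct ρ τ σ (v, 0)) : ℂ)
        = ((‖ρ σ v‖ ^ 2 : ℝ) : ℂ) := by
      simp [diagAct, WithLp.prod_inner_apply, inner_self_eq_norm_sq_to_K]
    rw [hd, norm_mul, Complex.norm_real, Complex.norm_real, Real.norm_eq_abs,
      Real.norm_eq_abs, abs_of_nonneg (by positivity : (0:ℝ) ≤ ‖ρ σ v‖ ^ 2),
      KN.norm_diag0 ρ τ v w, KN.sfun]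
    have ha := KN.apos ρ τ v w hv hw σ
    have hc := KN.cpos ρ τ v w hv hw σ
    rw [abs_of_nonneg (by positivity)]
    field_simp
  rw [fubiniStudyDist, hinner, KN.Xnorm ρ τ v w hv hw, KN.Ynorm ρ τ v w hv hw,
    mul_one, div_one]

theorem KN.energy_eq (ρ : G →* V ≃ₗ[ℂ] V) (τ : G →* W ≃ₗ[ℂ] W) (v : V) (w : W) (hv : v ≠ 0) (hw : w ≠ 0) (σ : G) :
    Real.log (‖τ σ w‖ ^ 2) - Real.log (‖ρ σ v‖ ^ 2)
      = Real.log ((KN.sfun ρ τ v w σ)⁻¹ ^ 2 - 1) := by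
  have ha := KN.apos ρ τ v w hv hw σ
  have hb := KN.bpos ρ τ v w hv hw σ
  have hc := KN.cpos ρ τ v w hv hw σ
  have h2 := KN.csq ρ τ v w σ
  have h1 : (KN.sfun ρ τ v w σ)⁻¹ ^ 2 - 1 = ‖τ σ w‖ ^ 2 / ‖ρ σ v‖ ^ 2 := by
    rw [KN.sfun]
    field_simp
    nlinarith
  rw [h1, Real.log_div (by positivity) (by positivity)]

theorem KN.diff_sq (ρ : G →* V ≃ₗ[ℂ] V) (τ : G →* W ≃ₗ[ℂ] W) (v : V) (w : W) (hv : v ≠ 0) (hw : w ≠ 0) (σ : G) :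
    ‖KN.npt ρ τ σ (v, w) - KN.npt ρ τ σ (v, 0)‖ ^ 2 = 2 - 2 * KN.sfun ρ τ v w σ := by
  have ha := KN.apos ρ τ v w hv hw σ
  have hb := KN.bpos ρ τ v w hv hw σ
  have hc := KN.cpos ρ τ v w hv hw σ
  have h2 := KN.csq ρ τ v w σ
  have hfst : (KN.npt ρ τ σ (v, w) - KN.npt ρ τ σ (v, 0)).fst
      = (‖diagAct ρ τ σ (v, w)‖⁻¹ - ‖ρ σ v‖⁻¹) • (ρ σ v) := by
    simp [KN.npt, diagAct, KN.norm_diag0 ρ τ v w, sub_smul]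
  have hsnd : (KN.npt ρ τ σ (v, w) - KN.npt ρ τ σ (v, 0)).snd
      = ‖diagAct ρ τ σ (v, w)‖⁻¹ • (τ σ w) := by
    simp [KN.npt, diagAct, KN.norm_diag0 ρ τ v w]
  rw [WithLp.prod_norm_sq_eq_of_L2, hfst, hsnd, norm_smul, norm_smul, KN.sfun]
  rw [Real.norm_eq_abs, norm_inv, norm_norm]
  rw [mul_pow, mul_pow, sq_abs]
  have hb2 : ‖τ σ w‖ ^ 2 = ‖diagAct ρ τ σ (v, w)‖ ^ 2 - ‖ρ σ v‖ ^ 2 := by linarith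
  rw [hb2]
  field_simp
  ring

/-- Key comparison: any lower bound for the diagonal Fubini–Study distances is a
lower bound for the distance between any two points of the orbit closures. -/
theorem KN.key (ρ : G →* V ≃ₗ[ℂ] V) (τ : G →* W ≃ₗ[ℂ] W) (v : V) (w : W) (hv : v ≠ 0) (hw : w ≠ 0)
    (β : ℝ) (hβ : ∀ σ : G, β ≤ Real.arccos (KN.sfun ρ τ v w σ)) :
    ∀ x ∈ closure (projOrbit ρ τ (v, w)), ∀ y ∈ closure (projOrbit ρ τ (v, 0)),
      β ≤ fubiniStudyDist x y := by
  have hfstcont : Continuous fun x : WithLp 2 (V × W) => ‖(x.fst : V)‖ :=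
    continuous_norm.comp (continuous_fst.comp (WithLp.prod_continuous_ofLp 2 V W))
  have hsndcont : Continuous fun x : WithLp 2 (V × W) => (x.snd : W) :=
    continuous_snd.comp (WithLp.prod_continuous_ofLp 2 V W)
  have hXsub : closure (projOrbit ρ τ (v, w)) ⊆
      {x : WithLp 2 (V × W) | ‖x‖ = 1 ∧ β ≤ Real.arccos ‖(x.fst : V)‖} := by
    apply closure_minimal
    · rw [KN.projOrbit_eq]
      rintro _ ⟨σ, rfl⟩
      exact ⟨KN.Xnorm ρ τ v w hv hw σ, by rw [KN.Xfst_norm ρ τ v w]; exact hβ σ⟩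
    · exact (isClosed_eq continuous_norm continuous_const).inter
        (isClosed_le continuous_const (Real.continuous_arccos.comp hfstcont))
  have hYsub : closure (projOrbit ρ τ (v, 0)) ⊆
      {y : WithLp 2 (V × W) | ‖y‖ = 1 ∧ (y.snd : W) = 0} := by
    apply closure_minimal
    · rw [KN.projOrbit_eq]
      rintro _ ⟨σ, rfl⟩
      exact ⟨KN.Ynorm ρ τ v w hv hw σ, KN.Ysnd ρ τ v w σ⟩
    · exact (isClosed_eq continuous_norm continuous_const).inter
        (isClosed_eq hsndcont continuous_const)
  intro x hx y hy
  obtain ⟨hx1, hx2⟩ := hXsub hx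
  obtain ⟨hy1, hy2⟩ := hYsub hy
  have hyfst : ‖(y.fst : V)‖ = 1 := by
    have h := WithLp.prod_norm_sq_eq_of_L2 y
    rw [hy1, hy2, norm_zero] at h
    nlinarith [norm_nonneg (y.fst : V)]
  have hip : (inner ℂ x y : ℂ) = (inner ℂ (x.fst : V) (y.fst : V) : ℂ) := by
    rw [WithLp.prod_inner_apply, WithLp.ofLp_fst, WithLp.ofLp_fst, WithLp.ofLp_snd,
      WithLp.ofLp_snd, hy2, inner_zero_right, add_zero]
  rw [fubiniStudyDist, hx1, hy1, mul_one, div_one, hip]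
  refine le_trans hx2 (KN.arccos_antitone ?_)
  calc ‖(inner ℂ (x.fst : V) (y.fst : V) : ℂ)‖ ≤ ‖(x.fst : V)‖ * ‖(y.fst : V)‖ :=
        norm_inner_le_norm _ _
    _ = ‖(x.fst : V)‖ := by rw [hyfst, mul_one]

end Aux

/-- Kempf–Ness energy: `inf_{σ ∈ G} p_{v,w}(σ) = log tan² d_g(cl O_{vw}, cl O_v)`
(with `log tan² 0 = -∞`), and `p_{v,w}` is bounded below on `G` iff the closures of
the orbits `O_{vw}` and `O_v` in `ℙ(V ⊕ W)` are disjoint. -/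
theorem inf_energy_eq_log_tan_sq_dist
    {G V W : Type*} [Group G] [TopologicalSpace G] [IsTopologicalGroup G]
    [NormedAddCommGroup V] [InnerProductSpace ℂ V] [FiniteDimensional ℂ V]
    [NormedAddCommGroup W] [InnerProductSpace ℂ W] [FiniteDimensional ℂ W]
    (ρ : G →* V ≃ₗ[ℂ] V) (τ : G →* W ≃ₗ[ℂ] W)
    (hρ : Continuous fun q : G × V => ρ q.1 q.2)
    (hτ : Continuous fun q : G × W => τ q.1 q.2)
    (v : V) (hv : v ≠ 0) (w : W) (hw : w ≠ 0)
    (δ : ℝ)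
    (hδ : δ = sInf {r : ℝ | ∃ x ∈ closure (projOrbit ρ τ (v, w)),
        ∃ y ∈ closure (projOrbit ρ τ (v, 0)), r = fubiniStudyDist x y}) :
    (⨅ σ : G, ((Real.log (‖τ σ w‖ ^ 2) - Real.log (‖ρ σ v‖ ^ 2) : ℝ) : EReal))
        = (if δ = 0 then (⊥ : EReal)
            else ((Real.log (Real.tan δ ^ 2) : ℝ) : EReal)) ∧
    (BddBelow (Set.range fun σ : G =>
        Real.log (‖τ σ w‖ ^ 2) - Real.log (‖ρ σ v‖ ^ 2))
      ↔ Disjoint (closure (projOrbit ρ τ (v, w)))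
          (closure (projOrbit ρ τ (v, 0)))) := by
  classical
  set s : G → ℝ := KN.sfun ρ τ v w with hs
  set S : Set ℝ := {r : ℝ | ∃ x ∈ closure (projOrbit ρ τ (v, w)),
      ∃ y ∈ closure (projOrbit ρ τ (v, 0)), r = fubiniStudyDist x y} with hS
  -- diagonal distances belong to `S`
  have hdS : ∀ σ : G, Real.arccos (s σ) ∈ S := by
    intro σ
    exact ⟨KN.npt ρ τ σ (v, w), subset_closure ⟨σ, rfl⟩,
      KN.npt ρ τ σ (v, 0), subset_closure ⟨σ, rfl⟩, (KN.dist_eq ρ τ v w hv hw σ).symm⟩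
  have hSlb : ∀ r ∈ S, (0:ℝ) ≤ r := by
    rintro r ⟨x, _, y, _, rfl⟩
    exact Real.arccos_nonneg _
  have hSbdd : BddBelow S := ⟨0, hSlb⟩
  have hSne : S.Nonempty := ⟨_, hdS 1⟩
  have hδ0 : 0 ≤ δ := hδ ▸ le_csInf hSne hSlb
  have hδle : ∀ σ : G, δ ≤ Real.arccos (s σ) := fun σ => hδ ▸ csInf_le hSbdd (hdS σ)
  have hδhalf : δ < Real.pi / 2 :=
    lt_of_le_of_lt (hδle 1) (Real.arccos_lt_pi_div_two.mpr (KN.spos ρ τ v w hv hw 1))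
  have hspos := KN.spos ρ τ v w hv hw
  have hslt1 := KN.slt1 ρ τ v w hv hw
  -- `tan² = cos⁻² - 1`
  have htan : ∀ d : ℝ, 0 < Real.cos d → Real.tan d ^ 2 = (Real.cos d)⁻¹ ^ 2 - 1 := by
    intro d hcd
    rw [Real.tan_eq_sin_div_cos, div_pow, Real.sin_sq]
    field_simp
  -- the lower-bound transfer
  have hLB : ∀ c : ℝ, (∀ σ : G, c ≤ Real.log (‖τ σ w‖ ^ 2) - Real.log (‖ρ σ v‖ ^ 2)) →
      (∀ σ : G, s σ ≤ Real.sqrt (1 / (1 + Real.exp c))) := by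
    intro c hc σ
    have h1 : c ≤ Real.log ((s σ)⁻¹ ^ 2 - 1) := by
      rw [← KN.energy_eq ρ τ v w hv hw σ]; exact hc σ
    have hpos : (0:ℝ) < (s σ)⁻¹ ^ 2 - 1 := by
      have h3 : 1 < (s σ)⁻¹ := (one_lt_inv₀ (hspos σ)).mpr (hslt1 σ)
      nlinarith
    have h2 : Real.exp c ≤ (s σ)⁻¹ ^ 2 - 1 :=
      (Real.le_log_iff_exp_le hpos).mp h1
    have h4 : s σ ^ 2 ≤ 1 / (1 + Real.exp c) := by
      rw [div_eq_inv_mul, mul_one]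
      have h5 : 1 + Real.exp c ≤ (s σ)⁻¹ ^ 2 := by linarith
      have h6 : (0:ℝ) < 1 + Real.exp c := by positivity
      calc s σ ^ 2 = ((s σ)⁻¹ ^ 2)⁻¹ := by
            rw [← inv_pow, inv_inv]
        _ ≤ (1 + Real.exp c)⁻¹ := by
            exact inv_anti₀ h6 h5
    exact (Real.le_sqrt' (hspos σ)).mpr h4
  -- κ facts
  have hκpos : ∀ c : ℝ, 0 < Real.sqrt (1 / (1 + Real.exp c)) := by
    intro c; positivity
  have hκlt1 : ∀ c : ℝ, Real.sqrt (1 / (1 + Real.exp c)) < 1 := by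
    intro c
    rw [show (1:ℝ) = Real.sqrt 1 by rw [Real.sqrt_one]]
    apply Real.sqrt_lt_sqrt (by positivity)
    rw [div_lt_one (by positivity)]
    linarith [Real.exp_pos c]
  -- from a real lower bound on the energy, `δ` is bounded below by a positive number
  have hδlb : ∀ c : ℝ, (∀ σ : G, c ≤ Real.log (‖τ σ w‖ ^ 2) - Real.log (‖ρ σ v‖ ^ 2)) →
      Real.arccos (Real.sqrt (1 / (1 + Real.exp c))) ≤ δ ∧
        0 < Real.arccos (Real.sqrt (1 / (1 + Real.exp c))) := by
    intro c hc
    set κ := Real.sqrt (1 / (1 + Real.exp c)) with hκ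
    have hβ : ∀ σ : G, Real.arccos κ ≤ Real.arccos (s σ) := fun σ =>
      KN.arccos_antitone (hLB c hc σ)
    have hall : ∀ r ∈ S, Real.arccos κ ≤ r := by
      rintro r ⟨x, hx, y, hy, rfl⟩
      exact KN.key ρ τ v w hv hw _ hβ x hx y hy
    exact ⟨hδ ▸ le_csInf hSne hall, Real.arccos_pos.mpr (hκlt1 c)⟩
  constructor
  · -- the infimum formula
    apply le_antisymm
    · rw [iInf_le_iff]
      intro b hb
      induction b using EReal.rec with
      | bot => exact bot_le
      | top =>
          exfalso
          exact (EReal.coe_lt_top _).not_ge (hb 1)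
      | coe c =>
          have hc : ∀ σ : G, c ≤ Real.log (‖τ σ w‖ ^ 2) - Real.log (‖ρ σ v‖ ^ 2) :=
            fun σ => EReal.coe_le_coe_iff.mp (hb σ)
          obtain ⟨hδge, hβpos⟩ := hδlb c hc
          have hδpos : 0 < δ := lt_of_lt_of_le hβpos hδge
          rw [if_neg hδpos.ne']
          rw [EReal.coe_le_coe_iff]
          set κ := Real.sqrt (1 / (1 + Real.exp c)) with hκ
          have hκ2 : κ ^ 2 = 1 / (1 + Real.exp c) := Real.sq_sqrt (by positivity)
          have hcosδpos : 0 < Real.cos δ :=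
            Real.cos_pos_of_mem_Ioo ⟨by linarith [Real.pi_pos], hδhalf⟩
          have hcosδle : Real.cos δ ≤ κ := by
            have h2 : Real.cos δ ≤ Real.cos (Real.arccos κ) :=
              Real.cos_le_cos_of_nonneg_of_le_pi (Real.arccos_nonneg κ)
                (by linarith [Real.pi_pos, hδhalf]) hδge
            rwa [Real.cos_arccos (by linarith [hκpos c]) (hκlt1 c).le] at h2
          rw [htan δ hcosδpos]
          have hinv : κ⁻¹ ≤ (Real.cos δ)⁻¹ := inv_anti₀ hcosδpos hcosδle
          have h7 : κ⁻¹ ^ 2 ≤ (Real.cos δ)⁻¹ ^ 2 :=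
            pow_le_pow_left₀ (by positivity) hinv 2
          have h8 : κ⁻¹ ^ 2 = 1 + Real.exp c := by
            rw [inv_pow, hκ2, one_div, inv_inv]
          have h9 : Real.exp c ≤ (Real.cos δ)⁻¹ ^ 2 - 1 := by linarith [h7, h8]
          calc c = Real.log (Real.exp c) := (Real.log_exp c).symm
            _ ≤ Real.log ((Real.cos δ)⁻¹ ^ 2 - 1) :=
                Real.log_le_log (Real.exp_pos c) h9
    · apply le_iInf
      intro σ
      by_cases hδz : δ = 0
      · rw [if_pos hδz]; exact bot_le
      · rw [if_neg hδz, EReal.coe_le_coe_iff]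
        have hδpos : 0 < δ := lt_of_le_of_ne hδ0 (Ne.symm hδz)
        have hcosδpos : 0 < Real.cos δ :=
          Real.cos_pos_of_mem_Ioo ⟨by linarith [Real.pi_pos], hδhalf⟩
        have hcosδlt1 : Real.cos δ < 1 := by
          have := Real.strictAntiOn_cos (Set.mem_Icc.mpr ⟨le_refl 0, Real.pi_pos.le⟩)
            (Set.mem_Icc.mpr ⟨hδ0, by linarith [Real.pi_pos, hδhalf]⟩) hδpos
          simpa using this
        have hsle : s σ ≤ Real.cos δ := by
          have h2 : Real.cos (Real.arccos (s σ)) ≤ Real.cos δ :=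
            Real.cos_le_cos_of_nonneg_of_le_pi hδ0 (Real.arccos_le_pi _) (hδle σ)
          rwa [Real.cos_arccos (by linarith [hspos σ]) (hslt1 σ).le] at h2
        rw [htan δ hcosδpos, KN.energy_eq ρ τ v w hv hw σ]
        apply Real.log_le_log
        · have h3 : 1 < (Real.cos δ)⁻¹ := (one_lt_inv₀ hcosδpos).mpr hcosδlt1
          nlinarith
        · have hinv : (Real.cos δ)⁻¹ ≤ (s σ)⁻¹ := inv_anti₀ (hspos σ) hsle
          have := pow_le_pow_left₀ (by positivity) hinv 2
          linarith
  · -- boundedness iff disjointness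
    constructor
    · rintro ⟨c, hc⟩
      have hc' : ∀ σ : G, c ≤ Real.log (‖τ σ w‖ ^ 2) - Real.log (‖ρ σ v‖ ^ 2) :=
        fun σ => hc ⟨σ, rfl⟩
      set κ := Real.sqrt (1 / (1 + Real.exp c)) with hκ
      have hβ : ∀ σ : G, Real.arccos κ ≤ Real.arccos (s σ) := fun σ =>
        KN.arccos_antitone (hLB c hc' σ)
      have hkey := KN.key ρ τ v w hv hw _ hβ
      rw [Set.disjoint_left]
      intro z hzA hzB
      have h0 := hkey z hzA z hzB
      have hz1 : ‖z‖ = 1 := by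
        have hsub : closure (projOrbit ρ τ (v, w)) ⊆
            {x : WithLp 2 (V × W) | ‖x‖ = 1} := by
          apply closure_minimal
          · rw [KN.projOrbit_eq]
            rintro _ ⟨σ, rfl⟩
            exact KN.Xnorm ρ τ v w hv hw σ
          · exact isClosed_eq continuous_norm continuous_const
        exact hsub hzA
      have hzz : fubiniStudyDist z z = 0 := by
        rw [fubiniStudyDist, inner_self_eq_norm_sq_to_K]
        rw [hz1]
        norm_num
      rw [hzz] at h0
      exact absurd h0 (not_le.mpr (Real.arccos_pos.mpr (hκlt1 c)))
    · intro hdis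
      -- the orbit closures are compact resp. closed; disjointness gives a gap
      have hA1 : closure (projOrbit ρ τ (v, w)) ⊆
          {x : WithLp 2 (V × W) | ‖x‖ = 1} := by
        apply closure_minimal
        · rw [KN.projOrbit_eq]
          rintro _ ⟨σ, rfl⟩
          exact KN.Xnorm ρ τ v w hv hw σ
        · exact isClosed_eq continuous_norm continuous_const
      have hAcomp : IsCompact (closure (projOrbit ρ τ (v, w))) := by
        apply Metric.isCompact_of_isClosed_isBounded isClosed_closure
        apply Bornology.IsBounded.subset (Metric.isBounded_closedBall (x := (0 : WithLp 2 (V × W))) (r := 1))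
        intro x hx
        rw [Metric.mem_closedBall, dist_zero_right, hA1 hx]
      have hAne : (closure (projOrbit ρ τ (v, w))).Nonempty :=
        ⟨KN.npt ρ τ 1 (v, w), subset_closure ⟨1, rfl⟩⟩
      obtain ⟨x₀, hx₀A, hx₀min'⟩ := hAcomp.exists_isMinOn hAne
        ((Metric.continuous_infDist_pt (closure (projOrbit ρ τ (v, 0)))).continuousOn)
      have hx₀min := isMinOn_iff.mp hx₀min'
      set ε := Metric.infDist x₀ (closure (projOrbit ρ τ (v, 0))) with hε
      have hBne : (closure (projOrbit ρ τ (v, 0))).Nonempty :=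
        ⟨KN.npt ρ τ 1 (v, 0), subset_closure ⟨1, rfl⟩⟩
      have hεpos : 0 < ε := by
        rw [hε]
        exact (IsClosed.notMem_iff_infDist_pos isClosed_closure hBne).mp
          (Set.disjoint_left.mp hdis hx₀A)
      -- each diagonal pair is `ε`-separated
      have hsep : ∀ σ : G, ε ≤ ‖KN.npt ρ τ σ (v, w) - KN.npt ρ τ σ (v, 0)‖ := by
        intro σ
        calc ε ≤ Metric.infDist (KN.npt ρ τ σ (v, w)) (closure (projOrbit ρ τ (v, 0))) :=
              hx₀min _ (subset_closure ⟨σ, rfl⟩)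
          _ ≤ dist (KN.npt ρ τ σ (v, w)) (KN.npt ρ τ σ (v, 0)) :=
              Metric.infDist_le_dist_of_mem (subset_closure ⟨σ, rfl⟩)
          _ = ‖KN.npt ρ τ σ (v, w) - KN.npt ρ τ σ (v, 0)‖ := dist_eq_norm _ _
      have hsκ : ∀ σ : G, s σ ≤ 1 - ε ^ 2 / 2 := by
        intro σ
        have h1 := KN.diff_sq ρ τ v w hv hw σ
        have h2 : ε ^ 2 ≤ ‖KN.npt ρ τ σ (v, w) - KN.npt ρ τ σ (v, 0)‖ ^ 2 :=
          pow_le_pow_left₀ hεpos.le (hsep σ) 2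
        rw [h1] at h2
        linarith
      set κ' := 1 - ε ^ 2 / 2 with hκ'
      have hκ'pos : 0 < κ' := lt_of_lt_of_le (hspos 1) (hsκ 1)
      have hκ'lt1 : κ' < 1 := by
        rw [hκ']
        nlinarith
      refine ⟨Real.log (κ'⁻¹ ^ 2 - 1), ?_⟩
      rintro r ⟨σ, rfl⟩
      show Real.log (κ'⁻¹ ^ 2 - 1)
        ≤ Real.log (‖τ σ w‖ ^ 2) - Real.log (‖ρ σ v‖ ^ 2)
      rw [KN.energy_eq ρ τ v w hv hw σ]
      apply Real.log_le_log
      · have h3 : 1 < κ'⁻¹ := (one_lt_inv₀ hκ'pos).mpr hκ'lt1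
        nlinarith
      · have hinv : κ'⁻¹ ≤ (s σ)⁻¹ := inv_anti₀ (hspos σ) (hsκ σ)
        have := pow_le_pow_left₀ (by positivity) hinv 2
        linarith
end
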